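/- (Logarithmic length of the stationary region.) Let η ∈ C²([0,∞)) satisfy η′(t) > 0 and η″(t) > 0 for all t ≥ 0, and assume η′(t) → ∞ as t → ∞. Let n ≥ 1, t₀ ≥ 0, κ, λ > 0, and let τₙ₋ and τₙ₊ be defined as: τₙ₋ := t₀ if η′(t₀) > (2λ−κ)/n, else (η′)^{−1}((2λ−κ)/n); τₙ₊ := t₀ if η′(t₀) > (2λ+κ)/n, else (η′)^{−1}((2λ+κ)/n). Then for any τ₋, τ₊ with τₙ₋ ≤ τ₋ < τ₊ ≤ τₙ₊, one has log((1+τ₊)/(1+τ₋)) ≤ (2κ/n) μ(τ₊), where μ(t) := max_{0≤τ≤t} 1/((1+τ)η″(τ)). -/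

import Mathlib

open Set Filter

/-- Logarithmic length of the stationary region. -/
theorem log_length_stationary_region
    (η η' η'' ηpinv μ : ℝ → ℝ)
    (hηd : ∀ t, 0 ≤ t → HasDerivAt η (η' t) t)
    (hηd' : ∀ t, 0 ≤ t → HasDerivAt η' (η'' t) t)
    (hη'pos : ∀ t, 0 ≤ t → 0 < η' t)
    (hη''pos : ∀ t, 0 ≤ t → 0 < η'' t)
    (hη'top : Tendsto η' atTop atTop)
    (hinv₁ : ∀ t, 0 ≤ t → ηpinv (η' t) = t)
    (hinv₂ : ∀ r, η' 0 ≤ r → 0 ≤ ηpinv r ∧ η' (ηpinv r) = r)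
    (hμ : ∀ t, 0 ≤ t → IsGreatest ((fun τ => 1 / ((1 + τ) * η'' τ)) '' Icc 0 t) (μ t))
    (n : ℕ) (hn : 1 ≤ n) (t₀ κ lam : ℝ)
    (ht₀ : 0 ≤ t₀) (hκ : 0 < κ) (hlam : 0 < lam)
    (τnm τnp : ℝ)
    (hτm : τnm = if (2 * lam - κ) / n < η' t₀ then t₀ else ηpinv ((2 * lam - κ) / n))
    (hτp : τnp = if (2 * lam + κ) / n < η' t₀ then t₀ else ηpinv ((2 * lam + κ) / n)) :
    ∀ τm τp : ℝ, τnm ≤ τm → τm < τp → τp ≤ τnp →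
      Real.log ((1 + τp) / (1 + τm)) ≤ 2 * κ / n * μ τp := by
  intro τm τp hm hmp hp
  have hn' : (0:ℝ) < n := by exact_mod_cast hn
  -- monotonicity of η' on Ici 0
  have hmono : MonotoneOn η' (Ici 0) := by
    apply monotoneOn_of_deriv_nonneg (convex_Ici 0)
    · intro x hx; exact (hηd' x hx).continuousAt.continuousWithinAt
    · intro x hx
      rw [interior_Ici] at hx
      exact (hηd' x hx.le).differentiableAt.differentiableWithinAt
    · intro x hx
      rw [interior_Ici] at hx
      rw [(hηd' x hx.le).deriv]
      exact (hη''pos x hx.le).le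
  -- τnm facts
  have hτnm : 0 ≤ τnm ∧ (2 * lam - κ) / n ≤ η' τnm := by
    rw [hτm]; split_ifs with h
    · exact ⟨ht₀, h.le⟩
    · push_neg at h
      have h0 : η' 0 ≤ (2 * lam - κ) / n :=
        le_trans (hmono (mem_Ici.mpr (le_refl (0:ℝ))) ht₀ ht₀) h
      obtain ⟨h1, h2⟩ := hinv₂ _ h0
      exact ⟨h1, h2.ge⟩
  have hτm0 : 0 ≤ τm := hτnm.1.trans hm
  have hτp0 : 0 ≤ τp := hτm0.trans hmp.le
  -- τnp facts: else-branch must hold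
  have hτnp : η' τnp ≤ (2 * lam + κ) / n := by
    rw [hτp] at hp ⊢
    split_ifs with h
    · -- then τnm = t₀ as well, contradiction with τm < τp
      exfalso
      have hlt : (2 * lam - κ) / n < (2 * lam + κ) / n := by
        apply div_lt_div_of_pos_right _ hn'
        linarith
      have h2 : τnm = t₀ := by rw [hτm, if_pos (hlt.trans h)]
      rw [if_pos h] at hp
      linarith
    · push_neg at h
      have h0 : η' 0 ≤ (2 * lam + κ) / n :=
        le_trans (hmono (mem_Ici.mpr (le_refl (0:ℝ))) ht₀ ht₀) h
      exact (hinv₂ _ h0).2.le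
  have hτnp0 : 0 ≤ τnp := hτp0.trans hp
  -- bounds on η' τm, η' τp
  have hlo : (2 * lam - κ) / n ≤ η' τm :=
    hτnm.2.trans (hmono hτnm.1 hτm0 hm)
  have hhi : η' τp ≤ (2 * lam + κ) / n :=
    (hmono hτp0 hτnp0 hp).trans hτnp
  have hdiff : η' τp - η' τm ≤ 2 * κ / n := by
    have : (2 * lam + κ) / n - (2 * lam - κ) / n = 2 * κ / n := by ring
    linarith
  -- μ bound
  have hμp := hμ τp hτp0
  have hμub : ∀ t ∈ Icc (0:ℝ) τp, 1 / ((1 + t) * η'' t) ≤ μ τp := by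
    intro t ht
    exact hμp.2 ⟨t, ht, rfl⟩
  have hμ0 : 0 ≤ μ τp := by
    have h00 : (1:ℝ) / ((1 + 0) * η'' 0) ≤ μ τp :=
      hμub 0 ⟨le_refl 0, hτp0⟩
    have : (0:ℝ) < 1 / ((1 + 0) * η'' 0) := by
      apply div_pos one_pos
      have := hη''pos 0 le_rfl
      nlinarith
    linarith
  -- the auxiliary function g
  set g : ℝ → ℝ := fun t => μ τp * η' t - Real.log (1 + t) with hg
  have hgderiv : ∀ t ∈ Icc τm τp,
      HasDerivAt g (μ τp * η'' t - 1 / (1 + t)) t := by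
    intro t ht
    have ht0 : (0:ℝ) ≤ t := hτm0.trans ht.1
    have h1t : (1:ℝ) + t ≠ 0 := by positivity
    have hlog : HasDerivAt (fun t : ℝ => Real.log (1 + t)) (1 / (1 + t)) t := by
      have := (HasDerivAt.const_add 1 (hasDerivAt_id t)).log h1t
      simpa using this
    exact ((hηd' t ht0).const_mul (μ τp)).sub hlog
  have hgmono : MonotoneOn g (Icc τm τp) := by
    apply monotoneOn_of_deriv_nonneg (convex_Icc τm τp)
    · intro x hx; exact (hgderiv x hx).continuousAt.continuousWithinAt
    · intro x hx
      rw [interior_Icc] at hx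
      exact (hgderiv x ⟨hx.1.le, hx.2.le⟩).differentiableAt.differentiableWithinAt
    · intro x hx
      rw [interior_Icc] at hx
      have hx' : x ∈ Icc τm τp := ⟨hx.1.le, hx.2.le⟩
      rw [(hgderiv x hx').deriv]
      have hx0 : (0:ℝ) ≤ x := hτm0.trans hx.1.le
      have hub := hμub x ⟨hx0, hx.2.le⟩
      have h1x : (0:ℝ) < 1 + x := by linarith
      have hηx := hη''pos x hx0
      have : 1 / (1 + x) ≤ μ τp * η'' x := by
        rw [div_le_iff₀ h1x]
        calc 1 = (1 / ((1 + x) * η'' x)) * ((1 + x) * η'' x) := by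
              field_simp
          _ ≤ μ τp * ((1 + x) * η'' x) := by
              apply mul_le_mul_of_nonneg_right hub (by positivity)
          _ = μ τp * η'' x * (1 + x) := by ring
      linarith
  have hkey : g τm ≤ g τp :=
    hgmono ⟨le_refl τm, hmp.le⟩ ⟨hmp.le, le_refl τp⟩ hmp.le
  have h1m : (0:ℝ) < 1 + τm := by linarith
  have h1p : (0:ℝ) < 1 + τp := by linarith
  rw [Real.log_div h1p.ne' h1m.ne']
  have : Real.log (1 + τp) - Real.log (1 + τm) ≤ μ τp * (η' τp - η' τm) := by
    simp only [hg] at hkey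
    linarith
  calc Real.log (1 + τp) - Real.log (1 + τm)
      ≤ μ τp * (η' τp - η' τm) := this
    _ ≤ μ τp * (2 * κ / n) := mul_le_mul_of_nonneg_left hdiff hμ0
    _ = 2 * κ / n * μ τp := by ring
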